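/- Let w be a nonempty area sequence of size n. For each 1 ≤ k ≤ max(ψ(w)), the number of letters of ψ(w) whose value is greater than or equal to k equals n − i_k + 1, where i_k is the k-th smallest element of bounces(w). -/

import Mathlib

/-- The `i`-th letter of the word `w` (`1`-indexed, as in the paper);
defaults to `0` out of range. -/
def get1 (w : List ℕ) (i : ℕ) : ℕ := w.getD (i - 1) 0

/-- `w` is the area sequence of a Dyck path: the first letter is `0` and each
letter exceeds the previous one by at most one. -/
def IsAreaSeq (w : List ℕ) : Prop :=
  (w ≠ [] → get1 w 1 = 0) ∧ ∀ i, 1 ≤ i → i < w.length → get1 w (i + 1) ≤ get1 w i + 1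

/-- Insertion at position `i` (for `0 ≤ i ≤ n`): `ins w 0` prepends a `0`, and
for `1 ≤ i ≤ n`, `ins w i` inserts the letter `w_i + 1` just after position `i`. -/
def ins (w : List ℕ) (i : ℕ) : List ℕ :=
  w.take i ++ (if i = 0 then 0 else get1 w i + 1) :: w.drop i

/-- The area statistic: the sum of the letters. -/
def area (w : List ℕ) : ℕ := w.sum

/-- The dinv statistic: `dinv w = Σ_i d_i` where `d_i` is the number of `j > i`
with `w_j = w_i` or `w_j = w_i - 1`. -/
def dinv (w : List ℕ) : ℕ :=
  ∑ i ∈ Finset.Icc 1 w.length,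
    ((Finset.Ioc i w.length).filter
      (fun j => get1 w j = get1 w i ∨ get1 w j + 1 = get1 w i)).card

/-- The maximal value of a word (`0` for the empty word). -/
def maxVal (w : List ℕ) : ℕ := w.foldr max 0

/-- Positions of the letters of maximal value `m`. -/
def Maxb (w : List ℕ) : Finset ℕ :=
  (Finset.Icc 1 w.length).filter (fun i => get1 w i = maxVal w)

/-- Positions `i` with `w_i = m - 1` such that all letters after position `i`
are `< m`. -/
def Maxa (w : List ℕ) : Finset ℕ :=
  (Finset.Icc 1 w.length).filter (fun i =>
    get1 w i + 1 = maxVal w ∧ ∀ j ∈ Finset.Ioc i w.length, get1 w j < maxVal w)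

/-- The position of the leftmost letter equal to the maximal value `m` in the
rightmost block of consecutive letters equal to `m`. -/
def i0 (w : List ℕ) : ℕ :=
  ((Finset.Icc 1 w.length).filter (fun i =>
    get1 w i = maxVal w ∧ (i = 1 ∨ get1 w (i - 1) ≠ maxVal w))).sup id

/-- The admissible insertion positions of `w`, listed in admissible order:
the elements of `Maxb w` in decreasing order, then the elements of `Maxa w`
in decreasing order, then `i0 w - 1`.  The empty word has the single
admissible insertion position `0`. -/
def admissible (w : List ℕ) : List ℕ :=
  if w = [] then [0]
  else ((Maxb w).sort (· ≤ ·)).reverse ++ ((Maxa w).sort (· ≤ ·)).reverse ++ [i0 w - 1]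

/-- Auxiliary version of the map `ψ`, reading the reversed word. -/
def psiRev : List ℕ → List ℕ
  | [] => []
  | a :: u => ins (psiRev u) ((admissible (psiRev u)).getD a 0)

/-- The map `ψ`: `ψ(ε) = ε` and `ψ(u a) = ins_{c_a}(ψ(u))` where
`c_0, c_1, …, c_k` are the admissible insertion positions of `ψ(u)` in
admissible order. -/
def psi (w : List ℕ) : List ℕ := psiRev w.reverse

/-- The bounce sequence: `b_1 = 0`, and `b_i = b_{i-1} + 1` if
`b_{i-1} + 1 ≤ w_i`, otherwise `b_i = 0`. -/
def bseq (w : List ℕ) : ℕ → ℕ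
  | 0 => 0
  | 1 => 0
  | (i + 2) => if bseq w (i + 1) + 1 ≤ get1 w (i + 2) then bseq w (i + 1) + 1 else 0

/-- The bounces of `w`: positions `1 < i ≤ n` with `b_i = 0`. -/
def bounces (w : List ℕ) : Finset ℕ :=
  (Finset.Icc 2 w.length).filter (fun i => bseq w i = 0)

/-- The bounce statistic: the sum of the reversed positions `n - i + 1` of the
bounces of `w`. -/
def bounce (w : List ℕ) : ℕ := ∑ i ∈ bounces w, (w.length - i + 1)


/-! ### Auxiliary lemmas -/

lemma le_maxVal {v : List ℕ} {x : ℕ} (h : x ∈ v) : x ≤ maxVal v := by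
  induction v with
  | nil => cases h
  | cons a t ih =>
    rcases List.mem_cons.mp h with rfl | h
    · exact le_max_left _ _
    · exact le_trans (ih h) (le_max_right _ _)

lemma get1_le_maxVal (v : List ℕ) (i : ℕ) : get1 v i ≤ maxVal v := by
  unfold get1
  rcases lt_or_ge (i-1) v.length with h | h
  · rw [List.getD_eq_getElem _ _ h]; exact le_maxVal (List.getElem_mem h)
  · rw [List.getD_eq_default _ _ h]; exact Nat.zero_le _

lemma maxVal_mem {v : List ℕ} (h : v ≠ []) : maxVal v ∈ v := by
  induction v with
  | nil => simp at h
  | cons a t ih =>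
    by_cases ht : t = []
    · subst ht; simp [maxVal]
    · have := ih ht
      unfold maxVal at *
      simp only [List.foldr_cons]
      rcases max_cases a (t.foldr max 0) with ⟨he, _⟩ | ⟨he, _⟩ <;> rw [he]
      · exact List.mem_cons_self
      · exact List.mem_cons_of_mem _ this

lemma get1_eq_getElem (v : List ℕ) (i : ℕ) (h1 : 1 ≤ i) (h2 : i ≤ v.length) :
    get1 v i = v[i-1]'(by omega) := by
  unfold get1; exact List.getD_eq_getElem v 0 (by omega)

lemma exists_get1_eq_maxVal {v : List ℕ} (h : v ≠ []) :
    ∃ i, 1 ≤ i ∧ i ≤ v.length ∧ get1 v i = maxVal v := by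
  obtain ⟨n, hn, he⟩ := List.mem_iff_getElem.mp (maxVal_mem h)
  exact ⟨n+1, by omega, by omega, by rw [get1_eq_getElem _ _ (by omega) (by omega)]; simpa using he⟩
/-- The value inserted by `ins v c`. -/
def insVal (v : List ℕ) (c : ℕ) : ℕ := if c = 0 then 0 else get1 v c + 1

lemma ins_eq (v : List ℕ) (c : ℕ) : ins v c = v.take c ++ insVal v c :: v.drop c := rfl

lemma length_ins (v : List ℕ) (c : ℕ) (hc : c ≤ v.length) :
    (ins v c).length = v.length + 1 := by
  rw [ins_eq]; simp; omega

lemma countP_ins (v : List ℕ) (c : ℕ) (p : ℕ → Bool) :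
    (ins v c).countP p = v.countP p + if p (insVal v c) then 1 else 0 := by
  rw [ins_eq, List.countP_append, List.countP_cons]
  have hv : v.countP p = (v.take c).countP p + (v.drop c).countP p := by
    conv_lhs => rw [← List.take_append_drop c v]
    rw [List.countP_append]
  rw [hv]; split <;> omega

lemma maxVal_append (l1 l2 : List ℕ) : maxVal (l1 ++ l2) = max (maxVal l1) (maxVal l2) := by
  induction l1 with
  | nil => simp [maxVal]
  | cons a t ih => simp only [maxVal, List.foldr_cons, List.cons_append] at *; rw [ih]; omega

lemma maxVal_ins (v : List ℕ) (c : ℕ) :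
    maxVal (ins v c) = max (insVal v c) (maxVal v) := by
  rw [ins_eq, maxVal_append]
  have h2 : maxVal (insVal v c :: v.drop c) = max (insVal v c) (maxVal (v.drop c)) := rfl
  rw [h2]
  have hv : maxVal v = max (maxVal (v.take c)) (maxVal (v.drop c)) := by
    conv_lhs => rw [← List.take_append_drop c v]
    rw [maxVal_append]
  rw [hv]; omega

lemma get1_ins_of_le (v : List ℕ) (c i : ℕ) (h1 : 1 ≤ i) (h2 : i ≤ c) (hc : c ≤ v.length) :
    get1 (ins v c) i = get1 v i := by
  rw [ins_eq]
  unfold get1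
  rw [List.getD_append]
  · rw [List.getD_eq_getElem _ _ (by simp; omega), List.getD_eq_getElem _ _ (by omega),
      List.getElem_take]
  · simp; omega

lemma get1_ins_self (v : List ℕ) (c : ℕ) (hc : c ≤ v.length) :
    get1 (ins v c) (c + 1) = insVal v c := by
  rw [ins_eq]
  unfold get1
  rw [List.getD_append_right _ _ _ _ (by simp)]
  have hl : (v.take c).length = c := by simp; omega
  simp only [hl, Nat.add_sub_cancel, Nat.sub_self, List.getD_cons_zero]

lemma get1_ins_of_gt (v : List ℕ) (c i : ℕ) (h1 : c + 2 ≤ i) (hc : c ≤ v.length) :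
    get1 (ins v c) i = get1 v (i - 1) := by
  rw [ins_eq]
  unfold get1
  rw [List.getD_append_right _ _ _ _ (by simp; omega)]
  have hl : (v.take c).length = c := by simp; omega
  have hd : i - 1 - (v.take c).length = (i - c - 2) + 1 := by omega
  rw [hd]
  simp only [List.getD_cons_succ]
  rw [List.getD_eq_getElem?_getD, List.getD_eq_getElem?_getD, List.getElem?_drop]
  have he : c + (i - c - 2) = i - 1 - 1 := by omega
  rw [he]
lemma card_filter_range (v : List ℕ) (p : ℕ → Bool) :
    ((Finset.range v.length).filter (fun j => p (v.getD j 0))).card = v.countP p := by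
  induction v using List.reverseRecOn with
  | nil => simp
  | append_singleton t a ih =>
    rw [List.countP_append, List.length_append, List.length_singleton,
      Finset.range_add_one, Finset.filter_insert]
    have hsame : ∀ j ∈ Finset.range t.length,
        ((t ++ [a]).getD j 0) = t.getD j 0 := by
      intro j hj
      rw [Finset.mem_range] at hj
      rw [List.getD_append _ _ _ _ hj]
    have hfc : (Finset.range t.length).filter (fun j => p ((t ++ [a]).getD j 0)) =
        (Finset.range t.length).filter (fun j => p (t.getD j 0)) := by
      apply Finset.filter_congr
      intro j hj
      rw [hsame j hj]
    have hlast : (t ++ [a]).getD t.length 0 = a := by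
      rw [List.getD_append_right _ _ _ _ le_rfl]
      simp
    rw [hlast]
    have hnotmem : t.length ∉ (Finset.range t.length).filter (fun j => p ((t ++ [a]).getD j 0)) := by
      simp
    split
    · rw [Finset.card_insert_of_notMem hnotmem, hfc, ih]
      simp_all [List.countP_cons]
    · rw [hfc, ih]
      simp_all [List.countP_cons]

lemma card_filter_get1 (v : List ℕ) (p : ℕ → Bool) :
    ((Finset.Icc 1 v.length).filter (fun i => p (get1 v i))).card = v.countP p := by
  rw [← card_filter_range]
  apply Finset.card_bij (fun i _ => i - 1)
  · intro i hi
    simp only [Finset.mem_filter, Finset.mem_Icc] at hi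
    simp only [Finset.mem_filter, Finset.mem_range]
    exact ⟨by omega, hi.2⟩
  · intro i hi j hj hij
    simp only [Finset.mem_filter, Finset.mem_Icc] at hi hj
    omega
  · intro j hj
    simp only [Finset.mem_filter, Finset.mem_range] at hj
    refine ⟨j + 1, ?_, by omega⟩
    simp only [Finset.mem_filter, Finset.mem_Icc]
    refine ⟨⟨by omega, by omega⟩, ?_⟩
    show p (get1 v (j+1)) = true
    unfold get1
    simpa using hj.2
lemma sort_rev_getD (s : Finset ℕ) (j : ℕ) (hj : j < s.card) :
    ((s.sort (· ≤ ·)).reverse).getD j 0 = (s.sort (· ≤ ·))[s.card - 1 - j]'(by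
      rw [Finset.length_sort]; omega) := by
  have hlen : (s.sort (· ≤ ·)).length = s.card := Finset.length_sort _
  have hjl : j < (s.sort (· ≤ ·)).reverse.length := by
    rw [List.length_reverse, hlen]; omega
  rw [List.getD_eq_getElem _ _ hjl, List.getElem_reverse]
  congr 1
  rw [hlen]

lemma sort_rev_getD_mem (s : Finset ℕ) (j : ℕ) (hj : j < s.card) :
    ((s.sort (· ≤ ·)).reverse).getD j 0 ∈ s := by
  rw [sort_rev_getD s j hj]
  rw [← Finset.mem_sort (α := ℕ) (· ≤ ·)]
  exact List.getElem_mem _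

lemma card_filter_gt_sort_rev (s : Finset ℕ) (j : ℕ) (hj : j < s.card) :
    (s.filter (fun x => ((s.sort (· ≤ ·)).reverse).getD j 0 < x)).card = j := by
  set l := s.sort (· ≤ ·) with hl
  have hlen : l.length = s.card := Finset.length_sort _
  set m := s.card - 1 - j with hm
  have hmlt : m < l.length := by omega
  have hc : ((s.sort (· ≤ ·)).reverse).getD j 0 = l[m] := sort_rev_getD s j hj
  rw [hc]
  have hslt : l.Pairwise (· < ·) := (Finset.sortedLT_sort s).pairwise
  have hpw := List.pairwise_iff_getElem.mp hslt
  have hset : s.filter (fun x => l[m] < x) =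
      (Finset.Ico (m+1) s.card).image (fun i => l.getD i 0) := by
    ext x
    simp only [Finset.mem_filter, Finset.mem_image, Finset.mem_Ico]
    constructor
    · rintro ⟨hxs, hxlt⟩
      have hxl : x ∈ l := (Finset.mem_sort (α := ℕ) (· ≤ ·)).mpr hxs
      obtain ⟨i, hi, he⟩ := List.mem_iff_getElem.mp hxl
      refine ⟨i, ⟨?_, by omega⟩, by rw [List.getD_eq_getElem _ _ hi, he]⟩
      by_contra hcon
      push_neg at hcon
      have : i < m ∨ i = m := by omega
      rcases this with h | h
      · have := hpw i m hi hmlt h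
        omega
      · subst h; omega
    · rintro ⟨i, ⟨hi1, hi2⟩, he⟩
      have hil : i < l.length := by omega
      rw [List.getD_eq_getElem _ _ hil] at he
      constructor
      · rw [← he, ← Finset.mem_sort (α := ℕ) (· ≤ ·)]
        exact List.getElem_mem _
      · rw [← he]
        exact hpw m i hmlt hil (by omega)
  rw [hset, Finset.card_image_of_injOn, Nat.card_Ico]
  · omega
  · intro x hx y hy hxy
    simp only [Finset.mem_coe, Finset.mem_Ico] at hx hy
    have hxl : x < l.length := by omega
    have hyl : y < l.length := by omega
    have hxy2 : l.getD x 0 = l.getD y 0 := hxy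
    rw [List.getD_eq_getElem _ _ hxl, List.getD_eq_getElem _ _ hyl] at hxy2
    by_contra hne
    rcases Nat.lt_or_ge x y with h | h
    · have := hpw x y hxl hyl h; omega
    · have := hpw y x hyl hxl (by omega); omega


lemma sort_insert_top (s : Finset ℕ) (a : ℕ) (h : ∀ b ∈ s, b < a) :
    (insert a s).sort (· ≤ ·) = s.sort (· ≤ ·) ++ [a] := by
  have ha : a ∉ s := fun hc => lt_irrefl a (h a hc)
  have p1 : List.Perm ((insert a s).sort (· ≤ ·)) (a :: s.sort (· ≤ ·)) :=
    ((Finset.sort_perm_toList _ _).trans (Finset.toList_insert ha)).trans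
      (List.Perm.cons a (Finset.sort_perm_toList _ _).symm)
  have p2 : List.Perm ((insert a s).sort (· ≤ ·)) (s.sort (· ≤ ·) ++ [a]) :=
    p1.trans (List.perm_append_singleton _ _).symm
  refine List.Perm.eq_of_pairwise' (Finset.pairwise_sort _ _) ?_ p2
  · rw [List.pairwise_append]
    refine ⟨Finset.pairwise_sort _ _, List.pairwise_singleton _ a, ?_⟩
    intro x hx y hy
    rw [List.mem_singleton] at hy
    subst hy
    exact le_of_lt (h x ((Finset.mem_sort (α := ℕ) (· ≤ ·)).mp hx))
lemma isAreaSeq_ins (v : List ℕ) (c : ℕ) (hv : IsAreaSeq v) (hc : c ≤ v.length) :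
    IsAreaSeq (ins v c) := by
  obtain ⟨h1, h2⟩ := hv
  have hlen := length_ins v c hc
  constructor
  · intro _
    by_cases hc0 : c = 0
    · subst hc0
      have := get1_ins_self v 0 (by omega)
      simpa [insVal] using this
    · rw [get1_ins_of_le v c 1 le_rfl (by omega) hc]
      apply h1
      intro hnil
      rw [hnil] at hc; simp at hc; omega
  · intro i hi1 hi2
    rw [hlen] at hi2
    -- cases on position of i+1 relative to c
    rcases Nat.lt_or_ge (i + 1) (c + 1) with h | h
    · -- i + 1 ≤ c
      rw [get1_ins_of_le v c (i+1) (by omega) (by omega) hc,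
        get1_ins_of_le v c i (by omega) (by omega) hc]
      exact h2 i hi1 (by omega)
    · rcases Nat.eq_or_lt_of_le h with h' | h'
      · -- i + 1 = c + 1, i.e. i = c ≥ 1
        have hic : i = c := by omega
        subst hic
        rw [get1_ins_self v i hc, get1_ins_of_le v i i hi1 le_rfl hc]
        have hne : ¬ i = 0 := by omega
        unfold insVal
        rw [if_neg hne]
      · rcases Nat.eq_or_lt_of_le h' with h'' | h''
        · -- i + 1 = c + 2, i.e. i = c + 1
          have hic : i = c + 1 := by omega
          subst hic
          rw [get1_ins_of_gt v c (c+2) le_rfl hc, get1_ins_self v c hc]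
          have hcc : c + 2 - 1 = c + 1 := by omega
          rw [hcc]
          by_cases hc0 : c = 0
          · subst hc0
            have h10 : get1 v 1 = 0 := h1 (by intro hnil; rw [hnil] at hi2; simp at hi2)
            have hh : get1 v (0 + 1) = 0 := by rw [show (0:ℕ)+1 = 1 from rfl, h10]
            rw [hh]
            simp [insVal]
          · simp only [insVal, if_neg hc0]
            have := h2 c (by omega) (by omega)
            omega
        · -- i + 1 ≥ c + 3, i.e. i ≥ c + 2
          rw [get1_ins_of_gt v c (i+1) (by omega) hc, get1_ins_of_gt v c i (by omega) hc]
          simp only [Nat.add_sub_cancel]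
          have := h2 (i-1) (by omega) (by omega)
          have he : i - 1 + 1 = i := by omega
          rw [he] at this
          exact this

lemma get1_append_left (u : List ℕ) (a : ℕ) (i : ℕ) (h1 : 1 ≤ i) (h2 : i ≤ u.length) :
    get1 (u ++ [a]) i = get1 u i := by
  unfold get1
  rw [List.getD_eq_getElem?_getD, List.getD_eq_getElem?_getD,
    List.getElem?_append_left (by omega : i - 1 < u.length)]

lemma get1_append_last (u : List ℕ) (a : ℕ) :
    get1 (u ++ [a]) (u.length + 1) = a := by
  unfold get1
  simp only [Nat.add_sub_cancel]
  rw [List.getD_append_right _ _ _ _ le_rfl]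
  simp

lemma bseq_le (w : List ℕ) (i : ℕ) (hi : 1 ≤ i) : bseq w i ≤ get1 w i := by
  match i, hi with
  | 1, _ => simp [bseq]
  | (i+2), _ =>
    rw [bseq]
    split <;> omega

lemma bseq_append (u : List ℕ) (a : ℕ) (i : ℕ) (h : i ≤ u.length) :
    bseq (u ++ [a]) i = bseq u i := by
  induction i using Nat.strong_induction_on with
  | _ i ih =>
    match i with
    | 0 => simp [bseq]
    | 1 => simp [bseq]
    | (j+2) =>
      rw [bseq, bseq, ih (j+1) (by omega) (by omega),
        get1_append_left u a (j+2) (by omega) (by omega)]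

lemma bounces_mem_le {w : List ℕ} {i : ℕ} (h : i ∈ bounces w) : 2 ≤ i ∧ i ≤ w.length := by
  unfold bounces at h
  rw [Finset.mem_filter, Finset.mem_Icc] at h
  exact h.1

lemma bounces_append (u : List ℕ) (a : ℕ) (hu : u ≠ []) :
    bounces (u ++ [a]) =
      if bseq u u.length + 1 ≤ a then bounces u
      else insert (u.length + 1) (bounces u) := by
  have hul : 1 ≤ u.length := List.length_pos_iff.mpr hu
  have hlen : (u ++ [a]).length = u.length + 1 := by simp
  have hb1 : bseq (u ++ [a]) (u.length + 1) =
      if bseq u u.length + 1 ≤ a then bseq u u.length + 1 else 0 := by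
    obtain ⟨m, hm⟩ : ∃ m, u.length = m + 1 := ⟨u.length - 1, by omega⟩
    rw [hm]
    rw [show m + 1 + 1 = m + 2 from rfl, bseq]
    rw [bseq_append u a (m+1) (by omega)]
    have h22 : m + 2 = u.length + 1 := by omega
    rw [h22, ← hm, get1_append_last]
  ext i
  by_cases hcond : bseq u u.length + 1 ≤ a
  · rw [if_pos hcond]
    simp only [bounces, Finset.mem_filter, Finset.mem_Icc, hlen]
    constructor
    · rintro ⟨⟨h2, h3⟩, h4⟩
      by_cases hi : i = u.length + 1
      · subst hi
        rw [hb1, if_pos hcond] at h4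
        omega
      · have hle : i ≤ u.length := by omega
        rw [bseq_append u a i hle] at h4
        exact ⟨⟨h2, hle⟩, h4⟩
    · rintro ⟨⟨h2, h3⟩, h4⟩
      rw [bseq_append u a i h3]
      exact ⟨⟨h2, by omega⟩, h4⟩
  · rw [if_neg hcond]
    simp only [bounces, Finset.mem_filter, Finset.mem_Icc, hlen, Finset.mem_insert]
    constructor
    · rintro ⟨⟨h2, h3⟩, h4⟩
      by_cases hi : i = u.length + 1
      · exact Or.inl hi
      · right
        have hle : i ≤ u.length := by omega
        rw [bseq_append u a i hle] at h4
        exact ⟨⟨h2, hle⟩, h4⟩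
    · rintro (rfl | ⟨⟨h2, h3⟩, h4⟩)
      · refine ⟨⟨by omega, le_rfl⟩, ?_⟩
        rw [hb1, if_neg hcond]
      · rw [bseq_append u a i h3]
        exact ⟨⟨h2, by omega⟩, h4⟩

lemma isAreaSeq_of_append {u : List ℕ} {a : ℕ} (h : IsAreaSeq (u ++ [a])) : IsAreaSeq u := by
  obtain ⟨h1, h2⟩ := h
  constructor
  · intro hu
    rw [← get1_append_left u a 1 le_rfl (List.length_pos_iff.mpr hu)]
    exact h1 (by simp)
  · intro i hi1 hi2
    rw [← get1_append_left u a (i+1) (by omega) (by omega), ← get1_append_left u a i (by omega) (by omega)]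
    exact h2 i hi1 (by simp; omega)
lemma Maxb_card (v : List ℕ) :
    (Maxb v).card = v.countP (fun x => decide (x = maxVal v)) := by
  rw [← card_filter_get1 v (fun x => decide (x = maxVal v))]
  unfold Maxb
  congr 1
  ext i
  simp [Finset.mem_filter]

lemma Maxb_nonempty {v : List ℕ} (hv : v ≠ []) : (Maxb v).Nonempty := by
  obtain ⟨i, h1, h2, h3⟩ := exists_get1_eq_maxVal hv
  exact ⟨i, by simp only [Maxb, Finset.mem_filter, Finset.mem_Icc]; exact ⟨⟨h1, h2⟩, h3⟩⟩

lemma mem_Maxb {v : List ℕ} {i : ℕ} (h : i ∈ Maxb v) :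
    1 ≤ i ∧ i ≤ v.length ∧ get1 v i = maxVal v := by
  simp only [Maxb, Finset.mem_filter, Finset.mem_Icc] at h
  tauto

lemma mem_Maxa {v : List ℕ} {i : ℕ} (h : i ∈ Maxa v) :
    1 ≤ i ∧ i ≤ v.length ∧ get1 v i + 1 = maxVal v ∧
      ∀ j ∈ Finset.Ioc i v.length, get1 v j < maxVal v := by
  simp only [Maxa, Finset.mem_filter, Finset.mem_Icc] at h
  tauto

lemma i0_spec {v : List ℕ} (hv : v ≠ []) :
    1 ≤ i0 v ∧ i0 v ≤ v.length ∧ get1 v (i0 v) = maxVal v ∧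
      (i0 v = 1 ∨ get1 v (i0 v - 1) ≠ maxVal v) := by
  set S0 := (Finset.Icc 1 v.length).filter (fun i =>
    get1 v i = maxVal v ∧ (i = 1 ∨ get1 v (i - 1) ≠ maxVal v)) with hS0
  have hne : S0.Nonempty := by
    have hbne := Maxb_nonempty hv
    set i1 := (Maxb v).min' hbne with hi1
    obtain ⟨h1, h2, h3⟩ := mem_Maxb ((Maxb v).min'_mem hbne)
    by_cases hone : i1 = 1
    · exact ⟨i1, by
        simp only [hS0, Finset.mem_filter, Finset.mem_Icc]
        exact ⟨⟨h1, h2⟩, h3, Or.inl hone⟩⟩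
    · refine ⟨i1, ?_⟩
      simp only [hS0, Finset.mem_filter, Finset.mem_Icc]
      refine ⟨⟨h1, h2⟩, h3, Or.inr ?_⟩
      intro hcon
      have hmem : i1 - 1 ∈ Maxb v := by
        simp only [Maxb, Finset.mem_filter, Finset.mem_Icc]
        exact ⟨⟨by omega, by omega⟩, hcon⟩
      have := (Maxb v).min'_le _ hmem
      omega
  obtain ⟨b, hb, he⟩ := Finset.exists_mem_eq_sup S0 hne id
  have : i0 v = b := by rw [i0, ← hS0, he, id]
  rw [this]
  simp only [hS0, Finset.mem_filter, Finset.mem_Icc] at hb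
  tauto

lemma maxa_ins_card (v : List ℕ) (c M : ℕ) (hc : c ≤ v.length) (hM : 1 ≤ M)
    (hmax' : maxVal (ins v c) = M) (hx : insVal v c = M) :
    (Maxa (ins v c)).card =
      ((Finset.Icc 1 v.length).filter (fun j => get1 v j + 1 = M ∧ c < j ∧
        ∀ j' ∈ Finset.Ioc j v.length, get1 v j' < M)).card := by
  have hlen := length_ins v c hc
  have hself : get1 (ins v c) (c + 1) = M := by rw [get1_ins_self v c hc, hx]
  apply Finset.card_bij' (fun i _ => i - 1) (fun j _ => j + 1)
  case hi =>
    intro i hi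
    simp only [Maxa, hmax', hlen, Finset.mem_filter, Finset.mem_Icc] at hi
    obtain ⟨⟨hi1, hi2⟩, hvi, hall⟩ := hi
    have hige : c + 2 ≤ i := by
      rcases Nat.lt_or_ge i (c + 1) with h | h
      · exfalso
        have := hall (c+1) (by rw [Finset.mem_Ioc]; omega)
        omega
      · rcases Nat.eq_or_lt_of_le h with h' | h'
        · exfalso; rw [← h', hself] at hvi; omega
        · omega
    have hgi : get1 (ins v c) i = get1 v (i - 1) := get1_ins_of_gt v c i hige hc
    simp only [Finset.mem_filter, Finset.mem_Icc]
    refine ⟨⟨by omega, by omega⟩, by rw [← hgi]; exact hvi, by omega, ?_⟩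
    intro j' hj'
    rw [Finset.mem_Ioc] at hj'
    have h2 := hall (j' + 1) (by rw [Finset.mem_Ioc]; omega)
    rw [get1_ins_of_gt v c (j'+1) (by omega) hc] at h2
    simpa using h2
  case hj =>
    intro j hj
    simp only [Finset.mem_filter, Finset.mem_Icc] at hj
    obtain ⟨⟨hj1, hj2⟩, hvj, hcj, hall⟩ := hj
    simp only [Maxa, hmax', hlen, Finset.mem_filter, Finset.mem_Icc]
    have hg : get1 (ins v c) (j + 1) = get1 v j := by
      rw [get1_ins_of_gt v c (j+1) (by omega) hc]; simp
    refine ⟨⟨by omega, by omega⟩, by rw [hg]; exact hvj, ?_⟩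
    intro j' hj'
    rw [Finset.mem_Ioc] at hj'
    rw [get1_ins_of_gt v c j' (by omega) hc]
    exact hall (j' - 1) (by rw [Finset.mem_Ioc]; omega)
  case left_inv =>
    intro i hi
    have h1 := (mem_Maxa hi).1
    omega
  case right_inv =>
    intro j hj
    omega

lemma admissible_length (v : List ℕ) (hv : v ≠ []) :
    (admissible v).length = (Maxb v).card + (Maxa v).card + 1 := by
  unfold admissible
  rw [if_neg hv]
  simp only [List.length_append, List.length_reverse, Finset.length_sort,
    List.length_singleton]

lemma step_lt (v : List ℕ) (hv : v ≠ []) (hva : IsAreaSeq v) (a' : ℕ)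
    (ha : a' < (Maxb v).card) (c : ℕ) (hceq : c = (admissible v).getD a' 0) :
    c ≤ v.length ∧ insVal v c = maxVal v + 1 ∧ maxVal (ins v c) = maxVal v + 1 ∧
      (Maxb (ins v c)).card = 1 ∧ (Maxa (ins v c)).card = a' := by
  have hcB : c = ((Maxb v).sort (· ≤ ·)).reverse.getD a' 0 := by
    rw [hceq]
    unfold admissible
    rw [if_neg hv, List.getD_append, List.getD_append]
    · rw [List.length_reverse, Finset.length_sort]; exact ha
    · rw [List.length_append, List.length_reverse, Finset.length_sort]; omega
  have hcmem : c ∈ Maxb v := by rw [hcB]; exact sort_rev_getD_mem _ _ ha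
  obtain ⟨hc1, hc2, hc3⟩ := mem_Maxb hcmem
  have hins : insVal v c = maxVal v + 1 := by
    unfold insVal; rw [if_neg (by omega), hc3]
  have hmax' : maxVal (ins v c) = maxVal v + 1 := by
    rw [maxVal_ins, hins]; omega
  refine ⟨hc2, hins, hmax', ?_, ?_⟩
  · rw [Maxb_card, hmax', countP_ins]
    have h0 : (v.countP fun x => decide (x = maxVal v + 1)) = 0 := by
      rw [List.countP_eq_zero]
      intro x hx
      have := le_maxVal hx
      simp; omega
    rw [h0, hins]
    simp
  · rw [maxa_ins_card v c (maxVal v + 1) hc2 (by omega) hmax' hins]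
    have hset : ((Finset.Icc 1 v.length).filter (fun j => get1 v j + 1 = maxVal v + 1 ∧ c < j ∧
        ∀ j' ∈ Finset.Ioc j v.length, get1 v j' < maxVal v + 1)) =
        (Maxb v).filter (fun x => c < x) := by
      ext j
      simp only [Finset.mem_filter, Finset.mem_Icc, Maxb]
      constructor
      · rintro ⟨⟨h1, h2⟩, h3, h4, -⟩
        exact ⟨⟨⟨h1, h2⟩, by omega⟩, h4⟩
      · rintro ⟨⟨⟨h1, h2⟩, h3⟩, h4⟩
        refine ⟨⟨h1, h2⟩, by omega, h4, ?_⟩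
        intro j' _
        have := get1_le_maxVal v j'
        omega
    rw [hset, hcB]
    exact card_filter_gt_sort_rev (Maxb v) a' ha
lemma Maxa_card_eq_zero_of_max_eq_zero (v : List ℕ) (h : maxVal v = 0) :
    (Maxa v).card = 0 := by
  rw [Finset.card_eq_zero]
  ext i
  simp only [Maxa, h, Finset.mem_filter, Finset.notMem_empty, iff_false, not_and]
  intro _ hcon
  exact absurd hcon (by omega)

lemma step_mid (v : List ℕ) (hv : v ≠ []) (a' : ℕ)
    (ha1 : (Maxb v).card ≤ a') (ha2 : a' < (Maxb v).card + (Maxa v).card)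
    (c : ℕ) (hceq : c = (admissible v).getD a' 0) :
    c ≤ v.length ∧ insVal v c = maxVal v ∧ maxVal (ins v c) = maxVal v ∧
      (Maxb (ins v c)).card = (Maxb v).card + 1 ∧
      (Maxa (ins v c)).card = a' - (Maxb v).card := by
  have hq : a' - (Maxb v).card < (Maxa v).card := by omega
  have hcA : c = ((Maxa v).sort (· ≤ ·)).reverse.getD (a' - (Maxb v).card) 0 := by
    rw [hceq]
    unfold admissible
    rw [if_neg hv, List.getD_append, List.getD_append_right]
    · rw [List.length_reverse, Finset.length_sort]
    · rw [List.length_reverse, Finset.length_sort]; omega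
    · rw [List.length_append, List.length_reverse, List.length_reverse,
        Finset.length_sort, Finset.length_sort]; omega
  have hcmem : c ∈ Maxa v := by rw [hcA]; exact sort_rev_getD_mem _ _ hq
  obtain ⟨hc1, hc2, hc3, hc4⟩ := mem_Maxa hcmem
  have hins : insVal v c = maxVal v := by
    unfold insVal; rw [if_neg (by omega)]; exact hc3
  have hmax' : maxVal (ins v c) = maxVal v := by
    rw [maxVal_ins, hins]; omega
  refine ⟨hc2, hins, hmax', ?_, ?_⟩
  · rw [Maxb_card, hmax', countP_ins, hins, Maxb_card]
    simp
  · rw [maxa_ins_card v c (maxVal v) hc2 (by omega) hmax' hins]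
    have hset : ((Finset.Icc 1 v.length).filter (fun j => get1 v j + 1 = maxVal v ∧ c < j ∧
        ∀ j' ∈ Finset.Ioc j v.length, get1 v j' < maxVal v)) =
        (Maxa v).filter (fun x => c < x) := by
      ext j
      simp only [Finset.mem_filter, Finset.mem_Icc, Maxa]
      tauto
    rw [hset, hcA]
    exact card_filter_gt_sort_rev (Maxa v) (a' - (Maxb v).card) hq

lemma step_last (v : List ℕ) (hv : v ≠ []) (hva : IsAreaSeq v) (a' : ℕ)
    (ha : a' = (Maxb v).card + (Maxa v).card)
    (c : ℕ) (hceq : c = (admissible v).getD a' 0) :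
    c ≤ v.length ∧ insVal v c = maxVal v ∧ maxVal (ins v c) = maxVal v ∧
      (Maxb (ins v c)).card = (Maxb v).card + 1 ∧
      (Maxa (ins v c)).card = a' - (Maxb v).card := by
  have hcI : c = i0 v - 1 := by
    rw [hceq]
    unfold admissible
    rw [if_neg hv, List.getD_append_right]
    · rw [List.length_append, List.length_reverse, List.length_reverse,
        Finset.length_sort, Finset.length_sort, ha]
      simp
    · rw [List.length_append, List.length_reverse, List.length_reverse,
        Finset.length_sort, Finset.length_sort]; omega
  obtain ⟨hi1, hi2, hi3, hi4⟩ := i0_spec hv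
  have hcle : c ≤ v.length := by omega
  by_cases hone : i0 v = 1
  · -- c = 0, M = 0
    have hc0 : c = 0 := by omega
    have hM0 : maxVal v = 0 := by
      rw [← hi3, hone]
      exact hva.1 hv
    have hins : insVal v c = maxVal v := by
      unfold insVal; rw [if_pos hc0, hM0]
    have hmax' : maxVal (ins v c) = maxVal v := by
      rw [maxVal_ins, hins]; omega
    refine ⟨hcle, hins, hmax', ?_, ?_⟩
    · rw [Maxb_card, hmax', countP_ins, hins, Maxb_card]
      simp
    · rw [Maxa_card_eq_zero_of_max_eq_zero _ (by rw [hmax', hM0]),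
        ha, Maxa_card_eq_zero_of_max_eq_zero _ hM0]
      omega
  · -- i0 ≥ 2
    have hi0ge : 2 ≤ i0 v := by omega
    have hcge : 1 ≤ c := by omega
    have hcne := hi4.resolve_left hone
    rw [← hcI] at hcne
    have harea := hva.2 c (by omega) (by omega)
    have hcp1 : c + 1 = i0 v := by omega
    rw [hcp1, hi3] at harea
    have hle := get1_le_maxVal v c
    have hc3 : get1 v c + 1 = maxVal v := by omega
    have hM1 : 1 ≤ maxVal v := by omega
    have hins : insVal v c = maxVal v := by
      unfold insVal; rw [if_neg (by omega)]; exact hc3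
    have hmax' : maxVal (ins v c) = maxVal v := by
      rw [maxVal_ins, hins]; omega
    refine ⟨hcle, hins, hmax', ?_, ?_⟩
    · rw [Maxb_card, hmax', countP_ins, hins, Maxb_card]
      simp
    · rw [maxa_ins_card v c (maxVal v) hcle hM1 hmax' hins]
      have hset : ((Finset.Icc 1 v.length).filter (fun j => get1 v j + 1 = maxVal v ∧ c < j ∧
          ∀ j' ∈ Finset.Ioc j v.length, get1 v j' < maxVal v)) = Maxa v := by
        ext j
        simp only [Finset.mem_filter, Finset.mem_Icc, Maxa]
        constructor
        · rintro ⟨hj1, hj2, hj3, hj4⟩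
          exact ⟨hj1, hj2, hj4⟩
        · rintro ⟨⟨hj1, hj2⟩, hj3, hj4⟩
          refine ⟨⟨hj1, hj2⟩, hj3, ?_, hj4⟩
          by_contra hcon
          push_neg at hcon
          have := hj4 (i0 v) (by rw [Finset.mem_Ioc]; omega)
          omega
      rw [hset, ha]
      omega
lemma bseq_last (u : List ℕ) (a : ℕ) (hu : u ≠ []) :
    bseq (u ++ [a]) (u.length + 1) =
      if bseq u u.length + 1 ≤ a then bseq u u.length + 1 else 0 := by
  have hul : 1 ≤ u.length := List.length_pos_iff.mpr hu
  obtain ⟨m, hm⟩ : ∃ m, u.length = m + 1 := ⟨u.length - 1, by omega⟩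
  rw [hm, show m + 1 + 1 = m + 2 from rfl, bseq, bseq_append u a (m+1) (by omega)]
  have h22 : m + 2 = u.length + 1 := by omega
  rw [h22, ← hm, get1_append_last]

lemma psiRev_cons (a : ℕ) (t : List ℕ) :
    psiRev (a :: t) = ins (psiRev t) ((admissible (psiRev t)).getD a 0) := rfl

theorem psi_inv : ∀ r : List ℕ, r ≠ [] → IsAreaSeq r.reverse →
    (psiRev r).length = r.reverse.length ∧
    IsAreaSeq (psiRev r) ∧
    maxVal (psiRev r) = (bounces r.reverse).card ∧
    (∀ k, 1 ≤ k → k ≤ (bounces r.reverse).card →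
      (psiRev r).countP (fun x => decide (k ≤ x)) +
        ((bounces r.reverse).sort (· ≤ ·)).getD (k-1) 0 = r.reverse.length + 1) ∧
    (Maxb (psiRev r)).card = bseq r.reverse r.reverse.length + 1 ∧
    (Maxa (psiRev r)).card =
      get1 r.reverse r.reverse.length - bseq r.reverse r.reverse.length ∧
    bseq r.reverse r.reverse.length ≤ get1 r.reverse r.reverse.length := by
  intro r
  induction r with
  | nil => intro h; exact absurd rfl h
  | cons a t ih =>
    intro _ harea
    rw [List.reverse_cons] at harea ⊢
    by_cases ht : t = []
    · -- base case: r = [a], and a = 0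
      subst ht
      simp only [List.reverse_nil, List.nil_append] at harea ⊢
      have ha0 : a = 0 := harea.1 (by simp)
      subst ha0
      have hpsi : psiRev [0] = [0] := rfl
      rw [hpsi]
      have hb : bounces [0] = ∅ := by
        unfold bounces
        have : Finset.Icc 2 [0].length = ∅ := by decide
        rw [this, Finset.filter_empty]
      refine ⟨rfl, harea, ?_, ?_, ?_, ?_, ?_⟩
      · rw [hb]; rfl
      · intro k hk1 hk2; rw [hb] at hk2; simp at hk2; omega
      · decide
      · decide
      · decide
    · -- inductive step
      have hu : t.reverse ≠ [] := by
        intro hc; apply ht; simpa using congrArg List.reverse hc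
      set u := t.reverse with hudef
      obtain ⟨hlen, hseq, hmax, hcnt, hp, hq, hba⟩ := ih ht (isAreaSeq_of_append harea)
      set v := psiRev t with hvdef
      have hv : v ≠ [] := by
        intro hc
        rw [hc] at hlen
        simp only [List.length_nil] at hlen
        exact hu (List.length_eq_zero_iff.mp hlen.symm)
      have hul : 1 ≤ u.length := List.length_pos_iff.mpr hu
      have hlast : get1 (u ++ [a]) (u.length + 1) = a := get1_append_last u a
      have hprev : get1 (u ++ [a]) u.length = get1 u u.length :=
        get1_append_left u a u.length hul le_rfl
      have halen : (u ++ [a]).length = u.length + 1 := by simp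
      have haval : a ≤ get1 u u.length + 1 := by
        have h2 := harea.2 u.length hul (by rw [halen]; omega)
        rw [hlast, hprev] at h2
        exact h2
      have hblast := bseq_last u a hu
      rw [psiRev_cons, ← hvdef]
      set c := (admissible v).getD a 0 with hcdef
      set M := (bounces u).card with hMdef
      set b := bseq u u.length with hbdef
      by_cases hcase : a < (Maxb v).card
      · -- new bounce at position u.length + 1
        obtain ⟨hcle, hins, hmax', hb', ha'⟩ := step_lt v hv hseq a hcase c hcdef
        have hcond : ¬ (b + 1 ≤ a) := by omega
        have hbounces : bounces (u ++ [a]) = insert (u.length + 1) (bounces u) := by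
          rw [bounces_append u a hu, if_neg hcond]
        have hnotin : u.length + 1 ∉ bounces u := by
          intro hco; have := bounces_mem_le hco; omega
        have hcard : (bounces (u ++ [a])).card = M + 1 := by
          rw [hbounces, Finset.card_insert_of_notMem hnotin]
        have hsort : (bounces (u ++ [a])).sort (· ≤ ·) =
            (bounces u).sort (· ≤ ·) ++ [u.length + 1] := by
          rw [hbounces]
          exact sort_insert_top _ _ (fun x hx => by have := bounces_mem_le hx; omega)
        have hbnew : bseq (u ++ [a]) (u.length + 1) = 0 := by
          rw [hblast, if_neg hcond]
        refine ⟨?_, isAreaSeq_ins v c hseq hcle, ?_, ?_, ?_, ?_, ?_⟩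
        · rw [length_ins v c hcle, hlen, halen]
        · rw [hmax', hmax, hcard]
        · intro k hk1 hk2
          rw [hcard] at hk2
          rw [countP_ins, halen, hsort]
          have hdec : (fun x => decide (k ≤ x)) (insVal v c) = true := by
            rw [hins, hmax]
            simp only [decide_eq_true_eq]
            omega
          rw [if_pos hdec]
          by_cases hkM : k ≤ M
          · have hgetd : ((bounces u).sort (· ≤ ·) ++ [u.length + 1]).getD (k-1) 0 =
                ((bounces u).sort (· ≤ ·)).getD (k-1) 0 := by
              apply List.getD_append
              rw [Finset.length_sort]; omega
            rw [hgetd]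
            have := hcnt k hk1 hkM
            omega
          · have hgetd : ((bounces u).sort (· ≤ ·) ++ [u.length + 1]).getD (k-1) 0 =
                u.length + 1 := by
              rw [List.getD_append_right _ _ _ _ (by rw [Finset.length_sort]; omega)]
              rw [Finset.length_sort]
              have hkk : k - 1 - M = 0 := by omega
              rw [hkk]
              rfl
            rw [hgetd]
            have hz : v.countP (fun x => decide (k ≤ x)) = 0 := by
              rw [List.countP_eq_zero]
              intro x hx
              have := le_maxVal hx
              rw [hmax] at this
              simp only [decide_eq_true_eq]
              omega
            rw [hz]
            omega
        · rw [halen, hbnew, hb']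
        · rw [halen, hbnew, hlast, ha']
          omega
        · rw [halen, hbnew, hlast]
          omega
      · -- no new bounce
        push_neg at hcase
        have haq : a ≤ (Maxb v).card + (Maxa v).card := by omega
        have hres : c ≤ v.length ∧ insVal v c = maxVal v ∧ maxVal (ins v c) = maxVal v ∧
            (Maxb (ins v c)).card = (Maxb v).card + 1 ∧
            (Maxa (ins v c)).card = a - (Maxb v).card := by
          rcases Nat.lt_or_ge a ((Maxb v).card + (Maxa v).card) with h | h
          · exact step_mid v hv a hcase h c hcdef
          · exact step_last v hv hseq a (by omega) c hcdef
        obtain ⟨hcle, hins, hmax', hb', ha'⟩ := hres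
        have hcond : b + 1 ≤ a := by omega
        have hbounces : bounces (u ++ [a]) = bounces u := by
          rw [bounces_append u a hu, if_pos hcond]
        have hbnew : bseq (u ++ [a]) (u.length + 1) = b + 1 := by
          rw [hblast, if_pos hcond]
        refine ⟨?_, isAreaSeq_ins v c hseq hcle, ?_, ?_, ?_, ?_, ?_⟩
        · rw [length_ins v c hcle, hlen, halen]
        · rw [hmax', hmax, hbounces]
        · intro k hk1 hk2
          rw [hbounces] at hk2 ⊢
          rw [countP_ins, halen]
          have hdec : (fun x => decide (k ≤ x)) (insVal v c) = true := by
            rw [hins, hmax]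
            simp only [decide_eq_true_eq]
            omega
          rw [if_pos hdec]
          have := hcnt k hk1 hk2
          omega
        · rw [halen, hbnew, hb']
          omega
        · rw [halen, hbnew, hlast, ha']
          omega
        · rw [halen, hbnew, hlast]
          omega

/-- For a nonempty area sequence `w` of size `n` and `1 ≤ k ≤ max (ψ w)`, the
number of letters of `ψ w` of value at least `k` equals `n - i_k + 1`, where
`i_k` is the `k`-th smallest element of `bounces w`. -/
theorem count_ge_eq_reversed_bounce (w : List ℕ) (hw : IsAreaSeq w) (hne : w ≠ [])
    (k : ℕ) (hk1 : 1 ≤ k) (hk2 : k ≤ maxVal (psi w)) :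
    (psi w).countP (fun x => decide (k ≤ x)) =
      w.length - ((bounces w).sort (· ≤ ·)).getD (k - 1) 0 + 1 := by
  unfold psi at hk2 ⊢
  have h := psi_inv w.reverse (by simpa using hne)
    (by rw [List.reverse_reverse]; exact hw)
  rw [List.reverse_reverse] at h
  obtain ⟨hlen, hseq, hmax, hcnt, -, -, -⟩ := h
  have hk2' : k ≤ (bounces w).card := by rw [← hmax]; exact hk2
  have hc := hcnt k hk1 hk2'
  have hkl : k - 1 < ((bounces w).sort (· ≤ ·)).length := by
    rw [Finset.length_sort]; omega
  have hmem : ((bounces w).sort (· ≤ ·)).getD (k-1) 0 ∈ bounces w := by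
    rw [List.getD_eq_getElem _ _ hkl, ← Finset.mem_sort (α := ℕ) (· ≤ ·)]
    exact List.getElem_mem _
  have hb := bounces_mem_le hmem
  omega
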